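/- Let M, a, s be positive integers with M > 1 such that ∑_{i=0}^{M-1} (a+i)^2 = s^2, and suppose M = 24·m₁ + 1 for a positive integer m₁. Then for every prime p > 3 with p ≡ 3 (mod 4), there do not exist integers i ≥ 0 and q ≥ 1 with p ∤ q such that 24·m₁ + 2 = p^(2i+1)·q; equivalently, the exact power of p dividing M + 1 is even. -/

import Mathlib

lemma sum_sq_aux (a : ℕ) : ∀ m : ℕ,
    6 * ∑ i ∈ Finset.range (m + 1), (a + i) ^ 2
      = (m + 1) * (6 * a ^ 2 + 6 * a * m + m * (2 * m + 1)) := by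
  intro m
  induction m with
  | zero => simp
  | succ n ih =>
    rw [Finset.sum_range_succ, Nat.mul_add, ih]
    ring

lemma sq_add_sq_step (p : ℕ) (hp : p.Prime) (h4 : p % 4 = 3) (s c M T : ℕ)
    (hM : p ∣ M + 1) (hT : p ∣ T) (heq : s ^ 2 = M * (c ^ 2 + T)) :
    p ∣ s ∧ p ∣ c := by
  haveI : Fact p.Prime := ⟨hp⟩
  have h : p ∣ s ^ 2 + c ^ 2 := by
    have he : s ^ 2 + c ^ 2 = (M + 1) * c ^ 2 + M * T := by rw [heq]; ring
    rw [he]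
    exact dvd_add (hM.mul_right _) (hT.mul_left _)
  by_cases hc : p ∣ c
  · have hc2 : p ∣ c ^ 2 := dvd_pow hc (by norm_num)
    have hs2 : p ∣ s ^ 2 := by
      have := Nat.dvd_sub h hc2
      simpa using this
    exact ⟨hp.dvd_of_dvd_pow hs2, hc⟩
  · exfalso
    have hc0 : (c : ZMod p) ≠ 0 := by
      rwa [Ne, ZMod.natCast_eq_zero_iff]
    have hsum : (s : ZMod p) ^ 2 + (c : ZMod p) ^ 2 = 0 := by
      have : ((s ^ 2 + c ^ 2 : ℕ) : ZMod p) = 0 := by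
        rw [ZMod.natCast_eq_zero_iff]; exact h
      push_cast at this
      exact this
    have hsq : IsSquare (-1 : ZMod p) := by
      refine ⟨(s : ZMod p) * (c : ZMod p)⁻¹, ?_⟩
      have hs2 : (s : ZMod p) ^ 2 = -(c : ZMod p) ^ 2 := by linear_combination hsum
      field_simp
      linear_combination -hs2
    rw [ZMod.exists_sq_eq_neg_one_iff] at hsq
    exact hsq h4

lemma descent (p : ℕ) (hp : p.Prime) (h4 : p % 4 = 3) :
    ∀ i s c M B₀ : ℕ, p ∣ M + 1 → ¬ p ∣ B₀ →
      s ^ 2 = M * (c ^ 2 + p ^ (2 * i + 1) * B₀) → False := by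
  intro i
  induction i with
  | zero =>
    intro s c M B₀ hM hB heq
    have hT : p ∣ p ^ (2 * 0 + 1) * B₀ := Dvd.dvd.mul_right (dvd_pow_self p (by omega)) _
    obtain ⟨hs, hc⟩ := sq_add_sq_step p hp h4 s c M _ hM hT heq
    obtain ⟨s₁, rfl⟩ := hs
    obtain ⟨c₁, rfl⟩ := hc
    -- p ∣ M * B₀
    have hz : (p : ℤ) * s₁ ^ 2 = (M : ℤ) * p * c₁ ^ 2 + (M : ℤ) * B₀ := by
      have hp0 : 0 < p := hp.pos
      have : p * (p * s₁ ^ 2) = p * ((M * p * c₁ ^ 2) + M * B₀) := by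
        calc p * (p * s₁ ^ 2) = (p * s₁) ^ 2 := by ring
        _ = M * ((p * c₁) ^ 2 + p ^ (2 * 0 + 1) * B₀) := heq
        _ = p * ((M * p * c₁ ^ 2) + M * B₀) := by ring
      have := Nat.eq_of_mul_eq_mul_left hp0 this
      exact_mod_cast this
    have hdvd : (p : ℤ) ∣ (M : ℤ) * B₀ := ⟨s₁ ^ 2 - (M : ℤ) * c₁ ^ 2, by linarith⟩
    have hdvdn : p ∣ M * B₀ := by exact_mod_cast hdvd
    rcases hp.dvd_mul.mp hdvdn with hpm | hpb
    · have : p ∣ 1 := by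
        have := Nat.dvd_sub hM hpm
        simpa using this
      exact hp.one_lt.ne' (Nat.dvd_one.mp this)
    · exact hB hpb
  | succ n ih =>
    intro s c M B₀ hM hB heq
    have hT : p ∣ p ^ (2 * (n + 1) + 1) * B₀ := Dvd.dvd.mul_right (dvd_pow_self p (by omega)) _
    obtain ⟨hs, hc⟩ := sq_add_sq_step p hp h4 s c M _ hM hT heq
    obtain ⟨s₁, rfl⟩ := hs
    obtain ⟨c₁, rfl⟩ := hc
    have hp2 : 0 < p ^ 2 := pow_pos hp.pos 2
    have key : s₁ ^ 2 = M * (c₁ ^ 2 + p ^ (2 * n + 1) * B₀) := by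
      refine Nat.eq_of_mul_eq_mul_left hp2 ?_
      calc p ^ 2 * s₁ ^ 2 = (p * s₁) ^ 2 := by ring
        _ = M * ((p * c₁) ^ 2 + p ^ (2 * (n + 1) + 1) * B₀) := heq
        _ = p ^ 2 * (M * (c₁ ^ 2 + p ^ (2 * n + 1) * B₀)) := by ring
    exact ih s₁ c₁ M B₀ hM hB key

theorem stmt (M a s m₁ : ℕ) (hM : 1 < M) (ha : 1 ≤ a) (hs : 1 ≤ s)
    (hsum : ∑ i ∈ Finset.range M, (a + i) ^ 2 = s ^ 2)
    (hm : 1 ≤ m₁) (hMeq : M = 24 * m₁ + 1) :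
    ∀ p : ℕ, p.Prime → 3 < p → p % 4 = 3 →
      ¬ ∃ i q : ℕ, 1 ≤ q ∧ ¬ p ∣ q ∧ 24 * m₁ + 2 = p ^ (2 * i + 1) * q := by
  intro p hp hp3 h4
  rintro ⟨i, q, hq1, hqnd, hq⟩
  -- main identity
  have hid : s ^ 2 = (24 * m₁ + 1) * ((a + 12 * m₁) ^ 2 + 4 * m₁ * (12 * m₁ + 1)) := by
    have h6 := sum_sq_aux a (24 * m₁)
    rw [show 24 * m₁ + 1 = M from hMeq.symm, hsum] at h6
    refine Nat.eq_of_mul_eq_mul_left (show 0 < 6 by norm_num) ?_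
    rw [h6, hMeq]; ring
  -- p^(2i+1) divides 12m₁+1
  have hpodd : ¬ p ∣ 2 := fun h => by have := Nat.le_of_dvd (by norm_num) h; omega
  have hcop : Nat.Coprime (p ^ (2 * i + 1)) 2 :=
    Nat.Coprime.pow_left _ ((Nat.coprime_primes hp Nat.prime_two).mpr (by omega))
  have hdvd2 : p ^ (2 * i + 1) ∣ 2 * (12 * m₁ + 1) := ⟨q, by omega⟩
  obtain ⟨q', hq'⟩ := hcop.dvd_of_dvd_mul_left hdvd2
  -- q = 2 * q'
  have hqq : q = 2 * q' := by
    have hppos : 0 < p ^ (2 * i + 1) := pow_pos hp.pos _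
    refine Nat.eq_of_mul_eq_mul_left hppos ?_
    rw [show p ^ (2 * i + 1) * (2 * q') = 2 * (p ^ (2 * i + 1) * q') by ring, ← hq']
    omega
  -- p does not divide 4 * m₁ * q'
  have hB : ¬ p ∣ 4 * m₁ * q' := by
    intro h
    rcases hp.dvd_mul.mp h with h1 | h1
    · rcases hp.dvd_mul.mp h1 with h2 | h2
      · exact hpodd (hp.dvd_of_dvd_pow (n := 2) (by simpa [show (2:ℕ)^2 = 4 by norm_num] using h2))
      · -- p ∣ m₁, but p ∣ 12 m₁ + 1
        have hpd : p ∣ 12 * m₁ + 1 := hq' ▸ Dvd.dvd.mul_right (dvd_pow_self p (by omega)) _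
        have : p ∣ 1 := by
          have := Nat.dvd_sub hpd (Dvd.dvd.mul_left h2 12)
          simpa using this
        exact hp.one_lt.ne' (Nat.dvd_one.mp this)
    · exact hqnd (hqq ▸ h1.mul_left 2)
  -- p ∣ M + 1
  have hpM : p ∣ (24 * m₁ + 1) + 1 := by
    have h1 : p ∣ p ^ (2 * i + 1) * q := Dvd.dvd.mul_right (dvd_pow_self p (by omega)) _
    rw [← hq] at h1
    exact (by omega : 24 * m₁ + 1 + 1 = 24 * m₁ + 2) ▸ h1
  exact descent p hp h4 i s (a + 12 * m₁) (24 * m₁ + 1) (4 * m₁ * q') hpM hB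
    (by rw [hid, hq']; ring)
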